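/- Fix d ∈ ℕ+, ν > 1/2, α > 0 and constants C > 0, C̄ > 0. Assume the Matérn-type information-gain bound: for every m ∈ ℕ+, every λ > 0 and every m-tuple Z of points of 𝒳, I_{λ²I_m}(Z) ≤ C̄·(m/λ²)^{d/(2ν+d)}·(ln(1 + m/λ²))^{2ν/(2ν+d)}. Let (λ̄_T)_{T∈ℕ+} be nonnegative reals (possibly zero) with λ̄_T² < C·T^{−2ν/d}·(ln(1+T))^{2ν(1+α)/d} for all T ∈ ℕ+, and for each T let x_{T,1},…,x_{T,T} ∈ 𝒳̃ (a nonempty subset of 𝒳) be chosen by maximum variance reduction with noise level λ̄_T²: for every t ∈ [T] and x ∈ 𝒳̃, σ_{λ̄_T²I_{t−1}}(x; X_{T,t−1}) ≤ σ_{λ̄_T²I_{t−1}}(x_{T,t}; X_{T,t−1}), where additionally K(X_{T,t},X_{T,t}) + λ̄_T²I_t is assumed invertible for every t ≤ T. Then there exist T̄ ∈ ℕ with T̄ ≥ 2 and C' > 0, depending only on C, C̄, α, d, ν, such that for every T ≥ T̄ and every x ∈ 𝒳̃: σ_{λ̄_T²I_T}(x; X_{T,T}) ≤ C'·T^{−ν/d}·(ln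 T)^{ν(1+α)/d}. -/

import Mathlib

open Matrix Real Finset

noncomputable section

universe u

/-- Gram (kernel) matrix of a finite tuple of points. -/
def gramMat {𝒳 : Type u} (k : 𝒳 → 𝒳 → ℝ) {m : ℕ} (X : Fin m → 𝒳) :
    Matrix (Fin m) (Fin m) ℝ :=
  Matrix.of fun i j => k (X i) (X j)

/-- Kernel vector `k(x, X)`. -/
def kVec {𝒳 : Type u} (k : 𝒳 → 𝒳 → ℝ) {m : ℕ} (X : Fin m → 𝒳) (x : 𝒳) : Fin m → ℝ :=
  fun i => k x (X i)

/-- Posterior variance `σ²_Σ(x; X)`. -/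
def postVar {𝒳 : Type u} (k : 𝒳 → 𝒳 → ℝ) {m : ℕ} (S : Matrix (Fin m) (Fin m) ℝ)
    (X : Fin m → 𝒳) (x : 𝒳) : ℝ :=
  k x x - kVec k X x ⬝ᵥ ((gramMat k X + S)⁻¹ *ᵥ kVec k X x)

/-- Posterior standard deviation `σ_Σ(x; X)`. -/
def postStd {𝒳 : Type u} (k : 𝒳 → 𝒳 → ℝ) {m : ℕ} (S : Matrix (Fin m) (Fin m) ℝ)
    (X : Fin m → 𝒳) (x : 𝒳) : ℝ :=
  Real.sqrt (postVar k S X x)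

/-- Posterior mean `μ_Σ(x; X, y)`. -/
def postMean {𝒳 : Type u} (k : 𝒳 → 𝒳 → ℝ) {m : ℕ} (S : Matrix (Fin m) (Fin m) ℝ)
    (X : Fin m → 𝒳) (y : Fin m → ℝ) (x : 𝒳) : ℝ :=
  kVec k X x ⬝ᵥ ((gramMat k X + S)⁻¹ *ᵥ y)

/-- Information gain `I_Σ(Z)`. -/
def infoGain {𝒳 : Type u} (k : 𝒳 → 𝒳 → ℝ) {m : ℕ} (S : Matrix (Fin m) (Fin m) ℝ)
    (Z : Fin m → 𝒳) : ℝ :=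
  (1 / 2) * Real.log ((S + gramMat k Z).det / S.det)

/-- `k` is a symmetric positive semidefinite kernel. -/
def IsKernel {𝒳 : Type u} (k : 𝒳 → 𝒳 → ℝ) : Prop :=
  (∀ x y, k x y = k y x) ∧ ∀ (m : ℕ) (Z : Fin m → 𝒳), (gramMat k Z).PosSemidef

/-- Prefix of length `t` of a sequence of points. -/
def preT {𝒳 : Type u} (x : ℕ → 𝒳) (t : ℕ) : Fin t → 𝒳 := fun i => x i.val


section AuxLemmas

variable {𝒳 : Type u} {k : 𝒳 → 𝒳 → ℝ}

lemma dot_mulVec_symm {m : ℕ} (A : Matrix (Fin m) (Fin m) ℝ) (hsym : A.IsHermitian)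
    (u z : Fin m → ℝ) : u ⬝ᵥ (A *ᵥ z) = (A *ᵥ u) ⬝ᵥ z := by
  have h : ∀ i j, A i j = A j i := fun i j => by
    have := congrFun (congrFun hsym j) i
    simpa using this
  simp only [dotProduct, mulVec, dotProduct, Finset.mul_sum, Finset.sum_mul]
  rw [Finset.sum_comm]
  exact Finset.sum_congr rfl fun i _ => Finset.sum_congr rfl fun j _ => by rw [h i j]; ring

lemma quad_le_inv {m : ℕ} (A : Matrix (Fin m) (Fin m) ℝ) (hA : A.PosSemidef)
    (hdet : A.det ≠ 0) (w z : Fin m → ℝ) :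
    2 * (z ⬝ᵥ w) - z ⬝ᵥ (A *ᵥ z) ≤ w ⬝ᵥ (A⁻¹ *ᵥ w) := by
  set u := A⁻¹ *ᵥ w with hu
  have hAu : A *ᵥ u = w := by
    rw [hu, Matrix.mulVec_mulVec, Matrix.mul_nonsing_inv _ (isUnit_iff_ne_zero.mpr hdet),
      Matrix.one_mulVec]
  have h0 := hA.dotProduct_mulVec_nonneg (z - u)
  rw [star_trivial] at h0
  have e1 : A *ᵥ (z - u) = A *ᵥ z - w := by rw [Matrix.mulVec_sub, hAu]
  rw [e1] at h0
  have e3 : u ⬝ᵥ (A *ᵥ z) = z ⬝ᵥ w := by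
    rw [dot_mulVec_symm A hA.1, hAu, dotProduct_comm]
  have e4 : u ⬝ᵥ w = w ⬝ᵥ (A⁻¹ *ᵥ w) := dotProduct_comm _ _
  have e2 : (z - u) ⬝ᵥ (A *ᵥ z - w) =
      z ⬝ᵥ (A *ᵥ z) - z ⬝ᵥ w - u ⬝ᵥ (A *ᵥ z) + u ⬝ᵥ w := by
    simp only [sub_dotProduct, dotProduct_sub]; ring
  rw [e2, e3, e4] at h0
  linarith

lemma psd_smul_one {m : ℕ} {c : ℝ} (hc : 0 ≤ c) :
    (c • (1 : Matrix (Fin m) (Fin m) ℝ)).PosSemidef := by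
  refine Matrix.PosSemidef.of_dotProduct_mulVec_nonneg ?_ ?_
  · unfold Matrix.IsHermitian
    ext i j
    simp [Matrix.one_apply, apply_ite]
    split <;> simp_all [eq_comm]
  · intro x
    have h1 : (c • (1 : Matrix (Fin m) (Fin m) ℝ)) *ᵥ x = c • x := by
      rw [Matrix.smul_mulVec, Matrix.one_mulVec]
    have h2 : x ⬝ᵥ (c • x) = c * (x ⬝ᵥ x) := by simp [dotProduct_smul, smul_eq_mul]
    rw [star_trivial, h1, h2]
    exact mul_nonneg hc (Finset.sum_nonneg fun i _ => mul_self_nonneg _)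

lemma psd_gram_add (hk : IsKernel k) {m : ℕ}
    (X : Fin m → 𝒳) {c : ℝ} (hc : 0 ≤ c) :
    (gramMat k X + c • (1 : Matrix (Fin m) (Fin m) ℝ)).PosSemidef := by
  have h1 := hk.2 m X
  have h2 := psd_smul_one (m := m) hc
  exact Matrix.PosSemidef.of_dotProduct_mulVec_nonneg (h1.1.add h2.1) fun x => by
    rw [Matrix.add_mulVec, dotProduct_add]
    exact add_nonneg (h1.dotProduct_mulVec_nonneg x) (h2.dotProduct_mulVec_nonneg x)

lemma posdef_gram_add (hk : IsKernel k) {m : ℕ}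
    (X : Fin m → 𝒳) {c : ℝ} (hc : 0 < c) :
    (gramMat k X + c • (1 : Matrix (Fin m) (Fin m) ℝ)).PosDef := by
  have h1 := hk.2 m X
  have h2 := psd_smul_one (m := m) hc.le
  refine Matrix.PosDef.of_dotProduct_mulVec_pos (h1.1.add h2.1) fun x hx => ?_
  rw [Matrix.add_mulVec, dotProduct_add, star_trivial]
  have hq : x ⬝ᵥ ((c • (1 : Matrix (Fin m) (Fin m) ℝ)) *ᵥ x) = c * (x ⬝ᵥ x) := by
    simp [Matrix.smul_mulVec, Matrix.one_mulVec, dotProduct_smul, smul_eq_mul]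
  have hxx : 0 < x ⬝ᵥ x := by
    have hne : x ⬝ᵥ x ≠ 0 := by
      intro h
      apply hx
      ext i
      have := Finset.sum_eq_zero_iff_of_nonneg
        (fun j (_ : j ∈ Finset.univ) => mul_self_nonneg (x j)) |>.mp h i (Finset.mem_univ i)
      simpa using mul_self_eq_zero.mp this
    rcases lt_or_eq_of_le (Finset.sum_nonneg fun i _ => mul_self_nonneg (x i)) with h | h
    · exact h
    · exact absurd h.symm hne
  have hg := h1.dotProduct_mulVec_nonneg x
  rw [star_trivial] at hg
  rw [hq]
  nlinarith

lemma gram_det_ne_zero (hk : IsKernel k) {m : ℕ}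
    (X : Fin m → 𝒳) {c : ℝ} (hc : 0 < c) :
    (gramMat k X + c • (1 : Matrix (Fin m) (Fin m) ℝ)).det ≠ 0 :=
  ne_of_gt (posdef_gram_add hk X hc).det_pos

lemma gram_snoc_quad (hk : IsKernel k) {m : ℕ}
    (X : Fin m → 𝒳) (x : 𝒳) (u : Fin m → ℝ) :
    (Fin.snoc u (-1) : Fin (m+1) → ℝ) ⬝ᵥ
      (gramMat k (Fin.snoc X x) *ᵥ (Fin.snoc u (-1) : Fin (m+1) → ℝ))
    = u ⬝ᵥ (gramMat k X *ᵥ u) - 2 * (u ⬝ᵥ kVec k X x) + k x x := by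
  have hsym : ∀ i, k (X i) x = k x (X i) := fun i => hk.1 _ _
  simp only [dotProduct, mulVec, dotProduct, Fin.sum_univ_castSucc, Fin.snoc_castSucc,
    Fin.snoc_last, gramMat, kVec, Matrix.of_apply, hsym]
  simp only [mul_add, mul_neg, mul_one, neg_mul, one_mul, add_mul, Finset.sum_add_distrib,
    Finset.sum_neg_distrib]
  ring_nf
  rw [Finset.sum_congr rfl (fun i (_ : i ∈ Finset.univ) => mul_comm (u i) (k x (X i)))]
  ring

lemma postVar_nonneg (hk : IsKernel k) {m : ℕ}
    (X : Fin m → 𝒳) (x : 𝒳) {c : ℝ} (hc : 0 ≤ c)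
    (hdet : (gramMat k X + c • (1 : Matrix (Fin m) (Fin m) ℝ)).det ≠ 0) :
    0 ≤ postVar k (c • (1 : Matrix (Fin m) (Fin m) ℝ)) X x := by
  set A := gramMat k X + c • (1 : Matrix (Fin m) (Fin m) ℝ) with hA
  set v := kVec k X x with hv
  set u := A⁻¹ *ᵥ v with hu
  have hAu : A *ᵥ u = v := by
    rw [hu, Matrix.mulVec_mulVec, Matrix.mul_nonsing_inv _ (isUnit_iff_ne_zero.mpr hdet),
      Matrix.one_mulVec]
  have hG := (hk.2 (m+1) (Fin.snoc X x)).dotProduct_mulVec_nonneg (Fin.snoc u (-1))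
  rw [star_trivial, gram_snoc_quad hk X x u] at hG
  have hsplit : u ⬝ᵥ (gramMat k X *ᵥ u) = u ⬝ᵥ v - c * (u ⬝ᵥ u) := by
    have h := hAu
    have : u ⬝ᵥ (A *ᵥ u) = u ⬝ᵥ (gramMat k X *ᵥ u) + c * (u ⬝ᵥ u) := by
      rw [hA, Matrix.add_mulVec, dotProduct_add]
      simp [Matrix.smul_mulVec, Matrix.one_mulVec, dotProduct_smul, smul_eq_mul]
    rw [hAu] at this
    linarith
  have hvu : v ⬝ᵥ (A⁻¹ *ᵥ v) = u ⬝ᵥ v := dotProduct_comm _ _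
  unfold postVar
  rw [← hA, ← hv, hvu]
  rw [hsplit] at hG
  have : u ⬝ᵥ kVec k X x = u ⬝ᵥ v := rfl
  rw [this] at hG
  have huu : 0 ≤ u ⬝ᵥ u := Finset.sum_nonneg fun i _ => mul_self_nonneg _
  linarith [mul_nonneg hc huu]

lemma postVar_mono_noise (hk : IsKernel k) {m : ℕ}
    (X : Fin m → 𝒳) (x : 𝒳) {c c' : ℝ} (hc : 0 ≤ c) (hcc' : c ≤ c')
    (hdet : (gramMat k X + c • (1 : Matrix (Fin m) (Fin m) ℝ)).det ≠ 0)
    (hdet' : (gramMat k X + c' • (1 : Matrix (Fin m) (Fin m) ℝ)).det ≠ 0) :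
    postVar k (c • (1 : Matrix (Fin m) (Fin m) ℝ)) X x
      ≤ postVar k (c' • (1 : Matrix (Fin m) (Fin m) ℝ)) X x := by
  set A := gramMat k X + c • (1 : Matrix (Fin m) (Fin m) ℝ) with hA
  set A' := gramMat k X + c' • (1 : Matrix (Fin m) (Fin m) ℝ) with hA'
  set v := kVec k X x with hv
  set z := A'⁻¹ *ᵥ v with hz
  have hA'z : A' *ᵥ z = v := by
    rw [hz, Matrix.mulVec_mulVec, Matrix.mul_nonsing_inv _ (isUnit_iff_ne_zero.mpr hdet'),
      Matrix.one_mulVec]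
  have hq := quad_le_inv A (psd_gram_add hk X hc) hdet v z
  have hAz : z ⬝ᵥ (A *ᵥ z) = z ⬝ᵥ v - (c' - c) * (z ⬝ᵥ z) := by
    have h1 : A *ᵥ z = A' *ᵥ z - ((c' - c) • (1 : Matrix (Fin m) (Fin m) ℝ)) *ᵥ z := by
      rw [← Matrix.sub_mulVec]
      congr 1
      rw [hA, hA', add_sub_assoc, ← sub_smul]
      have hcc : c' - (c' - c) = c := by ring
      rw [hcc]
    rw [h1, dotProduct_sub, hA'z]
    congr 1
    simp [Matrix.smul_mulVec, Matrix.one_mulVec, dotProduct_smul, smul_eq_mul]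
  have hzv : z ⬝ᵥ v = v ⬝ᵥ (A'⁻¹ *ᵥ v) := dotProduct_comm _ _
  have hzz : 0 ≤ z ⬝ᵥ z := Finset.sum_nonneg fun i _ => mul_self_nonneg _
  have key : v ⬝ᵥ (A'⁻¹ *ᵥ v) ≤ v ⬝ᵥ (A⁻¹ *ᵥ v) := by
    have h2 : 0 ≤ (c' - c) * (z ⬝ᵥ z) := mul_nonneg (by linarith) hzz
    rw [hAz, hzv] at hq
    linarith
  unfold postVar
  rw [← hA, ← hA', ← hv]
  linarith

lemma postVar_snoc_le (hk : IsKernel k) {m : ℕ}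
    (X : Fin (m+1) → 𝒳) (x : 𝒳) {c : ℝ} (hc : 0 ≤ c)
    (hdetP : (gramMat k (X ∘ Fin.castSucc) + c • (1 : Matrix (Fin m) (Fin m) ℝ)).det ≠ 0)
    (hdetA : (gramMat k X + c • (1 : Matrix (Fin (m+1)) (Fin (m+1)) ℝ)).det ≠ 0) :
    postVar k (c • (1 : Matrix (Fin (m+1)) (Fin (m+1)) ℝ)) X x
      ≤ postVar k (c • (1 : Matrix (Fin m) (Fin m) ℝ)) (X ∘ Fin.castSucc) x := by
  set P := gramMat k (X ∘ Fin.castSucc) + c • (1 : Matrix (Fin m) (Fin m) ℝ) with hP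
  set A := gramMat k X + c • (1 : Matrix (Fin (m+1)) (Fin (m+1)) ℝ) with hA
  set v := kVec k (X ∘ Fin.castSucc) x with hv
  set w := kVec k X x with hw
  set zc := P⁻¹ *ᵥ v with hzc
  set z : Fin (m+1) → ℝ := Fin.snoc zc 0 with hz
  have hPz : P *ᵥ zc = v := by
    rw [hzc, Matrix.mulVec_mulVec, Matrix.mul_nonsing_inv _ (isUnit_iff_ne_zero.mpr hdetP),
      Matrix.one_mulVec]
  have hq := quad_le_inv A (psd_gram_add hk X hc) hdetA w z
  have e1 : z ⬝ᵥ w = zc ⬝ᵥ v := by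
    simp only [hz, dotProduct, Fin.sum_univ_castSucc, Fin.snoc_castSucc, Fin.snoc_last,
      zero_mul, add_zero]
    rfl
  have e2 : z ⬝ᵥ (A *ᵥ z) = zc ⬝ᵥ (P *ᵥ zc) := by
    simp only [hz, dotProduct, mulVec, dotProduct, Fin.sum_univ_castSucc, Fin.snoc_castSucc,
      Fin.snoc_last, zero_mul, add_zero, mul_zero, hA, hP, gramMat, Matrix.add_apply,
      Matrix.smul_apply, Matrix.one_apply, Matrix.of_apply, smul_eq_mul]
    simp only [Fin.castSucc_inj, Function.comp_apply]
  rw [e1, e2, hPz] at hq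
  have e3 : zc ⬝ᵥ v = v ⬝ᵥ (P⁻¹ *ᵥ v) := dotProduct_comm _ _
  rw [e3] at hq
  unfold postVar
  rw [← hA, ← hP, ← hv, ← hw]
  linarith

lemma preT_succ_castSucc (xs : ℕ → 𝒳) (s : ℕ) :
    (preT xs (s+1)) ∘ Fin.castSucc = preT xs s := rfl

lemma postVar_prefix_mono (hk : IsKernel k) (xs : ℕ → 𝒳) {c : ℝ} (hc : 0 ≤ c) (T : ℕ)
    (hdets : ∀ t ≤ T, (gramMat k (preT xs t) + c • (1 : Matrix (Fin t) (Fin t) ℝ)).det ≠ 0)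
    (x : 𝒳) {t s : ℕ} (hts : t ≤ s) (hsT : s ≤ T) :
    postVar k (c • (1 : Matrix (Fin s) (Fin s) ℝ)) (preT xs s) x
      ≤ postVar k (c • (1 : Matrix (Fin t) (Fin t) ℝ)) (preT xs t) x := by
  induction s, hts using Nat.le_induction with
  | base => exact le_refl _
  | succ s hts ih =>
    have hsT' : s ≤ T := Nat.le_of_succ_le hsT
    have h1 := postVar_snoc_le hk (preT xs (s+1)) x hc
      (by rw [preT_succ_castSucc]; exact hdets s hsT') (hdets (s+1) hsT)
    rw [preT_succ_castSucc] at h1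
    exact le_trans h1 (ih hsT')

lemma det_snoc (hk : IsKernel k) {m : ℕ} (X : Fin (m+1) → 𝒳) {c : ℝ} (hc : 0 < c) :
    (gramMat k X + c • (1 : Matrix (Fin (m+1)) (Fin (m+1)) ℝ)).det
      = (gramMat k (X ∘ Fin.castSucc) + c • (1 : Matrix (Fin m) (Fin m) ℝ)).det
        * (c + postVar k (c • (1 : Matrix (Fin m) (Fin m) ℝ)) (X ∘ Fin.castSucc)
            (X (Fin.last m))) := by
  set P := gramMat k (X ∘ Fin.castSucc) + c • (1 : Matrix (Fin m) (Fin m) ℝ) with hP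
  set M := gramMat k X + c • (1 : Matrix (Fin (m+1)) (Fin (m+1)) ℝ) with hM
  set y := X (Fin.last m) with hy
  set v := kVec k (X ∘ Fin.castSucc) y with hv
  have hPdef : P.PosDef := posdef_gram_add hk _ hc
  haveI : Invertible P := P.invertibleOfIsUnitDet
    (isUnit_iff_ne_zero.mpr (ne_of_gt hPdef.det_pos))
  set B : Matrix (Fin m) (Fin 1) ℝ := Matrix.of (fun i _ => k (X i.castSucc) y) with hB
  set Cm : Matrix (Fin 1) (Fin m) ℝ := Matrix.of (fun _ j => k y (X j.castSucc)) with hC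
  set D : Matrix (Fin 1) (Fin 1) ℝ := Matrix.of (fun _ _ => k y y + c) with hD
  have hl : ∀ i : Fin m, (finSumFinEquiv (Sum.inl i) : Fin (m+1)) = i.castSucc := fun i => rfl
  have hr : ∀ j : Fin 1, (finSumFinEquiv (Sum.inr j) : Fin (m+1)) = Fin.last m := fun j => by
    apply Fin.ext
    have : j.val = 0 := by omega
    simp [Fin.natAdd, this, Fin.last]
  have hsub : M.submatrix finSumFinEquiv finSumFinEquiv = Matrix.fromBlocks P B Cm D := by
    ext i j
    cases i with
    | inl i =>
      cases j with
      | inl j =>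
        simp only [Matrix.submatrix_apply, hl, Matrix.fromBlocks_apply₁₁, hM, hP, gramMat,
          Matrix.add_apply, Matrix.smul_apply, Matrix.one_apply, Matrix.of_apply,
          Function.comp_apply, Fin.castSucc_inj, smul_eq_mul]
      | inr j =>
        have hne : i.castSucc ≠ Fin.last m := (Fin.castSucc_lt_last i).ne
        simp only [Matrix.submatrix_apply, hl, hr, Matrix.fromBlocks_apply₁₂, hM, hB, gramMat,
          Matrix.add_apply, Matrix.smul_apply, Matrix.one_apply, Matrix.of_apply, if_neg hne,
          smul_eq_mul, mul_zero, add_zero, ← hy]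
    | inr i =>
      cases j with
      | inl j =>
        have hne : j.castSucc ≠ Fin.last m := (Fin.castSucc_lt_last j).ne
        simp only [Matrix.submatrix_apply, hl, hr, Matrix.fromBlocks_apply₂₁, hM, hC, gramMat,
          Matrix.add_apply, Matrix.smul_apply, Matrix.one_apply, Matrix.of_apply,
          if_neg (Ne.symm hne), smul_eq_mul, mul_zero, add_zero, ← hy]
      | inr j =>
        simp only [Matrix.submatrix_apply, hr, Matrix.fromBlocks_apply₂₂, hM, hD, gramMat,
          Matrix.add_apply, Matrix.smul_apply, Matrix.one_apply, Matrix.of_apply, if_pos rfl,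
          smul_eq_mul, mul_one, ← hy]
        norm_num
  have hdetM : M.det = (Matrix.fromBlocks P B Cm D).det := by
    rw [← hsub, Matrix.det_submatrix_equiv_self]
  rw [hdetM, Matrix.det_fromBlocks₁₁, Matrix.invOf_eq_nonsing_inv]
  congr 1
  rw [Matrix.det_fin_one]
  have hmul : (Cm * P⁻¹ * B) 0 0 = v ⬝ᵥ (P⁻¹ *ᵥ v) := by
    have hB0 : ∀ j : Fin m, B j 0 = v j := fun j => hk.1 _ _
    have hC0 : ∀ i : Fin m, Cm 0 i = v i := fun i => rfl
    simp only [Matrix.mul_apply, dotProduct, mulVec, dotProduct, hB0, hC0]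
    simp only [Finset.sum_mul, Finset.mul_sum]
    rw [Finset.sum_comm]
    apply Finset.sum_congr rfl
    intro i _
    apply Finset.sum_congr rfl
    intro j _
    ring
  simp only [Matrix.sub_apply, hmul, hD, Matrix.of_apply]
  unfold postVar
  rw [← hP, ← hv]
  ring

lemma det_prefix_lb (hk : IsKernel k) (xs : ℕ → 𝒳) {c : ℝ} (hc : 0 < c) :
    ∀ T : ℕ, (∀ t < T, c < postVar k (c • (1 : Matrix (Fin t) (Fin t) ℝ)) (preT xs t) (xs t)) →
    (2*c)^T ≤ (gramMat k (preT xs T) + c • (1 : Matrix (Fin T) (Fin T) ℝ)).det := by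
  intro T
  induction T with
  | zero =>
    intro _
    simp [Matrix.det_fin_zero]
  | succ T ih =>
    intro hbig
    have h1 := det_snoc hk (preT xs (T+1)) hc
    have hcomp : (preT xs (T+1)) ∘ Fin.castSucc = preT xs T := rfl
    have hlast : preT xs (T+1) (Fin.last T) = xs T := rfl
    rw [hcomp, hlast] at h1
    have h2 := ih (fun t ht => hbig t (Nat.lt_succ_of_lt ht))
    have h3 := hbig T (Nat.lt_succ_self T)
    have hpow : (0:ℝ) < (2*c)^T := by positivity
    calc (2*c)^(T+1) = (2*c)^T * (2*c) := pow_succ _ _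
      _ ≤ (gramMat k (preT xs T) + c • (1 : Matrix (Fin T) (Fin T) ℝ)).det
          * (c + postVar k (c • (1 : Matrix (Fin T) (Fin T) ℝ)) (preT xs T) (xs T)) := by
        apply mul_le_mul h2 (by linarith) (by linarith) (le_trans hpow.le h2)
      _ = _ := h1.symm

end AuxLemmas

set_option maxHeartbeats 1000000 in
/-- MVR posterior-standard-deviation bound in the near-noiseless regime
under the Matérn-type information-gain bound; `T̄` and `C'` depend only on
`C`, `C̄`, `α`, `d`, `ν`. -/
theorem mvr_posterior_std_bound_Matern_noiseless
    (d : ℕ) (hd : 0 < d) (ν : ℝ) (hν : 1 / 2 < ν) (α : ℝ) (hα : 0 < α)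
    (C : ℝ) (hC : 0 < C) (Cb : ℝ) (hCb : 0 < Cb) :
    ∃ Tb : ℕ, 2 ≤ Tb ∧ ∃ C' : ℝ, 0 < C' ∧
      ∀ (𝒳 : Type u) (k : 𝒳 → 𝒳 → ℝ), IsKernel k →
      (∀ m : ℕ, 0 < m → ∀ l : ℝ, 0 < l → ∀ Z : Fin m → 𝒳,
        infoGain k ((l ^ 2) • (1 : Matrix (Fin m) (Fin m) ℝ)) Z
          ≤ Cb * ((m : ℝ) / l ^ 2) ^ ((d : ℝ) / (2 * ν + (d : ℝ)))
              * (Real.log (1 + (m : ℝ) / l ^ 2)) ^ (2 * ν / (2 * ν + (d : ℝ)))) →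
      ∀ lamBar : ℕ → ℝ, (∀ T, 0 ≤ lamBar T) →
      (∀ T : ℕ, 0 < T →
        lamBar T ^ 2 < C * (T : ℝ) ^ (-(2 * ν) / (d : ℝ))
            * (Real.log (1 + (T : ℝ))) ^ (2 * ν * (1 + α) / (d : ℝ))) →
      ∀ Xtil : Set 𝒳, Xtil.Nonempty →
      ∀ xs : ℕ → ℕ → 𝒳,
      (∀ T, 0 < T → ∀ t < T, xs T t ∈ Xtil) →
      (∀ T, 0 < T → ∀ t ≤ T,
        (gramMat k (preT (xs T) t)
          + (lamBar T ^ 2) • (1 : Matrix (Fin t) (Fin t) ℝ)).det ≠ 0) →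
      (∀ T, 0 < T → ∀ t < T, ∀ x ∈ Xtil,
        postStd k ((lamBar T ^ 2) • (1 : Matrix (Fin t) (Fin t) ℝ)) (preT (xs T) t) x
          ≤ postStd k ((lamBar T ^ 2) • (1 : Matrix (Fin t) (Fin t) ℝ)) (preT (xs T) t)
              (xs T t)) →
      ∀ T, Tb ≤ T → ∀ x ∈ Xtil,
        postStd k ((lamBar T ^ 2) • (1 : Matrix (Fin T) (Fin T) ℝ)) (preT (xs T) T) x
          ≤ C' * (T : ℝ) ^ (-(ν / (d : ℝ)))
              * (Real.log (T : ℝ)) ^ (ν * (1 + α) / (d : ℝ)) := by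
  have hd1 : (1:ℝ) ≤ (d:ℝ) := by exact_mod_cast hd
  have hdpos : (0:ℝ) < (d:ℝ) := by linarith
  have hdne : (d:ℝ) ≠ 0 := ne_of_gt hdpos
  have hν0 : (0:ℝ) < ν := by linarith
  have hspos : (0:ℝ) < 2*ν + (d:ℝ) := by linarith
  have hsne : (2*ν + (d:ℝ)) ≠ 0 := ne_of_gt hspos
  -- constants
  set θ : ℝ := (d:ℝ)/(2*ν + (d:ℝ)) with hθdef
  set φ : ℝ := 2*ν/(2*ν + (d:ℝ)) with hφdef
  set p : ℝ := 2*ν*(1+α)/(d:ℝ) with hpdef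
  set q : ℝ := 2*ν*α/(2*ν + (d:ℝ)) with hqdef
  set r : ℝ := (2*ν+(d:ℝ))/(d:ℝ) with hrdef
  have hθ0 : 0 ≤ θ := by rw [hθdef]; exact div_nonneg hdpos.le hspos.le
  have hφ0 : 0 ≤ φ := by
    rw [hφdef]; apply div_nonneg (by linarith only [hν0]) hspos.le
  have hp0 : 0 ≤ p := by
    rw [hpdef]; apply div_nonneg (by nlinarith only [hν0, hα]) hdpos.le
  have hq0 : 0 < q := by
    rw [hqdef]; apply div_pos (by nlinarith only [hν0, hα]) hspos
  have hr0 : 0 < r := by rw [hrdef]; exact div_pos hspos hdpos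
  set C₁ : ℝ := max 1 C⁻¹ with hC₁def
  have hC₁1 : (1:ℝ) ≤ C₁ := le_max_left _ _
  have hC₁0 : (0:ℝ) < C₁ := by linarith only [hC₁1]
  set c₆ : ℝ := Real.log (2*C₁) + r with hc₆def
  have hl2C₁ : 0 ≤ Real.log (2*C₁) := Real.log_nonneg (by linarith only [hC₁1])
  have hc₆0 : 0 < c₆ := by rw [hc₆def]; linarith only [hl2C₁, hr0]
  set K₀ : ℝ := Cb * C^(-θ) * c₆^φ with hK₀def
  have hK₀ : 0 < K₀ := by
    rw [hK₀def]
    exact mul_pos (mul_pos hCb (Real.rpow_pos_of_pos hC _)) (Real.rpow_pos_of_pos hc₆0 _)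
  have hlog2 : 0 < Real.log 2 := Real.log_pos one_lt_two
  set X₀ : ℝ := 2*K₀/Real.log 2 + 1 with hX₀def
  have hX₀1 : (1:ℝ) ≤ X₀ := by
    rw [hX₀def]
    have : 0 ≤ 2*K₀/Real.log 2 := div_nonneg (by linarith only [hK₀]) hlog2.le
    linarith only [this]
  have hX₀0 : (0:ℝ) < X₀ := by linarith only [hX₀1]
  set E : ℝ := X₀^(1/q) with hEdef
  have hE0 : 0 ≤ E := by rw [hEdef]; exact Real.rpow_nonneg hX₀0.le _
  refine ⟨max 3 (⌈Real.exp E⌉₊ + 1), le_trans (by norm_num) (le_max_left _ _),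
    Real.sqrt C * (2:ℝ)^(ν*(1+α)/(d:ℝ)),
    mul_pos (Real.sqrt_pos.mpr hC) (Real.rpow_pos_of_pos two_pos _), ?_⟩
  intro 𝒳 k hker hIG lamBar hlam0 hlam2 Xtil hXtil xs hxsmem hdets hmvr T hTb x hx
  -- basic T facts
  have hT3 : 3 ≤ T := le_trans (le_max_left _ _) hTb
  have hT0 : 0 < T := by omega
  have hTpos : (0:ℝ) < (T:ℝ) := by exact_mod_cast hT0
  have hTR : (3:ℝ) ≤ (T:ℝ) := by exact_mod_cast hT3
  have hT1 : (1:ℝ) ≤ (T:ℝ) := by linarith only [hTR]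
  set L : ℝ := Real.log (1 + (T:ℝ)) with hLdef
  have hlnT1 : 1 ≤ Real.log (T:ℝ) := by
    rw [Real.le_log_iff_exp_le hTpos]
    have := Real.exp_one_lt_d9
    linarith
  have hlogT0 : 0 ≤ Real.log (T:ℝ) := by linarith only [hlnT1]
  have hlogT_le_L : Real.log (T:ℝ) ≤ L := by
    rw [hLdef]
    exact Real.log_le_log hTpos (by linarith only [hTpos])
  have hL1 : 1 ≤ L := le_trans hlnT1 hlogT_le_L
  have hLpos : 0 < L := by linarith only [hL1]
  have hEL : E < L := by
    have h1 : (⌈Real.exp E⌉₊ + 1 : ℕ) ≤ T := le_trans (le_max_right _ _) hTb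
    have h2 : Real.exp E < (T:ℝ) := by
      have h3 : Real.exp E ≤ (⌈Real.exp E⌉₊ : ℝ) := Nat.le_ceil _
      have h4 : ((⌈Real.exp E⌉₊ + 1 : ℕ) : ℝ) ≤ (T:ℝ) := by exact_mod_cast h1
      push_cast at h4
      linarith
    have : E < Real.log (T:ℝ) := by
      rw [Real.lt_log_iff_exp_lt hTpos]
      exact h2
    linarith
  set c : ℝ := C * (T:ℝ)^(-(2*ν)/(d:ℝ)) * L^p with hcdef
  have hcpos : 0 < c := by
    rw [hcdef]
    exact mul_pos (mul_pos hC (Real.rpow_pos_of_pos hTpos _)) (Real.rpow_pos_of_pos hLpos _)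
  -- T/c computations
  have hTc : (T:ℝ)/c = C⁻¹ * (T:ℝ)^r * L^(-p) := by
    rw [hcdef, div_eq_iff (ne_of_gt hcpos)]
    rw [show C⁻¹ * (T:ℝ)^r * L^(-p) * (C * (T:ℝ)^(-(2*ν)/(d:ℝ)) * L^p)
        = (C⁻¹*C) * ((T:ℝ)^r * (T:ℝ)^(-(2*ν)/(d:ℝ))) * (L^(-p) * L^p) from by ring]
    rw [inv_mul_cancel₀ (ne_of_gt hC), ← Real.rpow_add hTpos, ← Real.rpow_add hLpos]
    rw [show r + -(2*ν)/(d:ℝ) = 1 from by rw [hrdef]; field_simp; ring]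
    rw [show -p + p = 0 from by ring, Real.rpow_one, Real.rpow_zero]
    ring
  have hTcpos : 0 < (T:ℝ)/c := div_pos hTpos hcpos
  have haTc : ((T:ℝ)/c)^θ = C^(-θ) * (T:ℝ) * L^(-(p*θ)) := by
    have h1 : (0:ℝ) ≤ C⁻¹ := (inv_nonneg).mpr hC.le
    have h2 : (0:ℝ) ≤ (T:ℝ)^r := Real.rpow_nonneg hTpos.le _
    have h3 : (0:ℝ) ≤ L^(-p) := Real.rpow_nonneg hLpos.le _
    rw [hTc, Real.mul_rpow (mul_nonneg h1 h2) h3, Real.mul_rpow h1 h2,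
      Real.inv_rpow hC.le, ← Real.rpow_neg hC.le, ← Real.rpow_mul hTpos.le,
      ← Real.rpow_mul hLpos.le]
    rw [show r*θ = 1 from by rw [hrdef, hθdef]; field_simp, Real.rpow_one]
    rw [show -p*θ = -(p*θ) from by ring]
  have hTr1 : (1:ℝ) ≤ (T:ℝ)^r := by
    have := Real.rpow_le_rpow_of_exponent_le hT1 hr0.le
    rwa [Real.rpow_zero] at this
  have hTc_le : (T:ℝ)/c ≤ C₁ * (T:ℝ)^r := by
    rw [hTc]
    have h1 : L^(-p) ≤ 1 :=
      Real.rpow_le_one_of_one_le_of_nonpos hL1 (by linarith only [hp0])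
    calc C⁻¹ * (T:ℝ)^r * L^(-p) ≤ C⁻¹ * (T:ℝ)^r * 1 := by
          apply mul_le_mul_of_nonneg_left h1
          exact mul_nonneg ((inv_nonneg).mpr hC.le) (Real.rpow_nonneg hTpos.le _)
      _ = C⁻¹ * (T:ℝ)^r := mul_one _
      _ ≤ C₁ * (T:ℝ)^r := by
          apply mul_le_mul_of_nonneg_right (le_max_right 1 C⁻¹)
          exact Real.rpow_nonneg hTpos.le _
  have h1Tc : 1 + (T:ℝ)/c ≤ 2*C₁*(T:ℝ)^r := by
    have h5 : (1:ℝ) ≤ C₁ * (T:ℝ)^r := by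
      calc (1:ℝ) = 1*1 := by norm_num
        _ ≤ C₁ * (T:ℝ)^r := mul_le_mul hC₁1 hTr1 (by norm_num) (by linarith only [hC₁0])
    linarith only [hTc_le, h5]
  have hlog1 : Real.log (1 + (T:ℝ)/c) ≤ c₆ * Real.log (T:ℝ) := by
    have h6 : Real.log (1 + (T:ℝ)/c) ≤ Real.log (2*C₁*(T:ℝ)^r) :=
      Real.log_le_log (by linarith only [hTcpos]) h1Tc
    rw [Real.log_mul (ne_of_gt (by linarith only [hC₁0] : (0:ℝ) < 2*C₁)) (ne_of_gt (Real.rpow_pos_of_pos hTpos r)),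
      Real.log_rpow hTpos] at h6
    have h7 : Real.log (2*C₁) * 1 ≤ Real.log (2*C₁) * Real.log (T:ℝ) :=
      mul_le_mul_of_nonneg_left hlnT1 hl2C₁
    rw [hc₆def]
    calc Real.log (1 + (T:ℝ)/c) ≤ Real.log (2*C₁) + r * Real.log (T:ℝ) := h6
      _ ≤ Real.log (2*C₁) * Real.log (T:ℝ) + r * Real.log (T:ℝ) := by linarith only [h6, h7]
      _ = (Real.log (2*C₁) + r) * Real.log (T:ℝ) := by ring
  have hlogbase0 : 0 ≤ Real.log (1 + (T:ℝ)/c) := Real.log_nonneg (by linarith only [hTcpos])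
  have hlogφ : (Real.log (1 + (T:ℝ)/c))^φ ≤ c₆^φ * L^φ := by
    have h8 : Real.log (1 + (T:ℝ)/c) ≤ c₆ * L :=
      le_trans hlog1 (mul_le_mul_of_nonneg_left hlogT_le_L hc₆0.le)
    calc (Real.log (1 + (T:ℝ)/c))^φ ≤ (c₆*L)^φ := Real.rpow_le_rpow hlogbase0 h8 hφ0
      _ = c₆^φ * L^φ := Real.mul_rpow hc₆0.le hLpos.le
  have key : Cb * ((T:ℝ)/c)^θ * (Real.log (1 + (T:ℝ)/c))^φ < (T:ℝ) * Real.log 2 / 2 := by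
    have step1 : Cb * ((T:ℝ)/c)^θ * (Real.log (1 + (T:ℝ)/c))^φ
        ≤ Cb * (C^(-θ) * (T:ℝ) * L^(-(p*θ))) * (c₆^φ * L^φ) := by
      rw [haTc]
      apply mul_le_mul_of_nonneg_left hlogφ
      have t1 := Real.rpow_pos_of_pos hC (-θ)
      have t2 := Real.rpow_pos_of_pos hLpos (-(p*θ))
      have : (0:ℝ) ≤ C^(-θ) * (T:ℝ) * L^(-(p*θ)) := by
        apply mul_nonneg (mul_nonneg t1.le hTpos.le) t2.le
      exact mul_nonneg hCb.le this
    have step2 : Cb * (C^(-θ) * (T:ℝ) * L^(-(p*θ))) * (c₆^φ * L^φ)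
        = K₀ * (T:ℝ) * (L^(-(p*θ)) * L^φ) := by rw [hK₀def]; ring
    have step3 : L^(-(p*θ)) * L^φ = L^(-q) := by
      rw [← Real.rpow_add hLpos]
      congr 1
      rw [hpdef, hθdef, hφdef, hqdef]
      field_simp
      ring
    have hLq : X₀ < L^q := by
      have hEq : E^q = X₀ := by
        rw [hEdef, ← Real.rpow_mul hX₀0.le, one_div, inv_mul_cancel₀ (ne_of_gt hq0),
          Real.rpow_one]
      calc X₀ = E^q := hEq.symm
        _ < L^q := Real.rpow_lt_rpow hE0 hEL hq0
    have hfinal : K₀ * L^(-q) < Real.log 2/2 := by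
      rw [Real.rpow_neg hLpos.le, ← div_eq_mul_inv,
        div_lt_iff₀ (Real.rpow_pos_of_pos hLpos q)]
      have h9 : Real.log 2/2 * X₀ < Real.log 2/2 * L^q :=
        mul_lt_mul_of_pos_left hLq (by linarith only [hlog2])
      have h10 : Real.log 2/2 * X₀ = K₀ + Real.log 2/2 := by
        rw [hX₀def]
        field_simp
      linarith only [h9, h10, hlog2]
    calc Cb * ((T:ℝ)/c)^θ * (Real.log (1 + (T:ℝ)/c))^φ
        ≤ K₀ * (T:ℝ) * L^(-q) := by rw [← step3, ← step2]; exact step1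
      _ = (T:ℝ) * (K₀ * L^(-q)) := by ring
      _ < (T:ℝ) * (Real.log 2/2) := by
          exact mul_lt_mul_of_pos_left hfinal hTpos
      _ = (T:ℝ) * Real.log 2 / 2 := by ring
  -- apply info-gain hypothesis at noise level sqrt c
  have hl0 : 0 < Real.sqrt c := Real.sqrt_pos.mpr hcpos
  have hl2 : Real.sqrt c^2 = c := Real.sq_sqrt hcpos.le
  have hIG' := hIG T hT0 (Real.sqrt c) hl0 (preT (xs T) T)
  rw [hl2] at hIG'
  have hIGlt : infoGain k (c • (1 : Matrix (Fin T) (Fin T) ℝ)) (preT (xs T) T)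
      < (T:ℝ) * Real.log 2 / 2 := lt_of_le_of_lt hIG' key
  -- extract a good time step
  have hexists : ∃ t, t < T ∧
      postVar k (c • (1 : Matrix (Fin t) (Fin t) ℝ)) (preT (xs T) t) (xs T t) ≤ c := by
    by_contra hcon
    push_neg at hcon
    have hlb := det_prefix_lb hker (xs T) hcpos T (fun t ht => hcon t ht)
    have hdetS : (c • (1 : Matrix (Fin T) (Fin T) ℝ)).det = c^T := by
      rw [Matrix.det_smul, Matrix.det_one, mul_one, Fintype.card_fin]
    have hgain : (T:ℝ) * Real.log 2 / 2
        ≤ infoGain k (c • (1 : Matrix (Fin T) (Fin T) ℝ)) (preT (xs T) T) := by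
      unfold infoGain
      rw [hdetS]
      have hratio : (2:ℝ)^T
          ≤ (c • (1 : Matrix (Fin T) (Fin T) ℝ) + gramMat k (preT (xs T) T)).det / c^T := by
        rw [le_div_iff₀ (pow_pos hcpos T), add_comm]
        calc (2:ℝ)^T * c^T = (2*c)^T := (mul_pow 2 c T).symm
          _ ≤ _ := hlb
      have h11 : Real.log ((2:ℝ)^T)
          ≤ Real.log ((c • (1 : Matrix (Fin T) (Fin T) ℝ) + gramMat k (preT (xs T) T)).det
            / c^T) := Real.log_le_log (by positivity) hratio
      rw [Real.log_pow] at h11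
      push_cast at h11
      linarith only [h11]
    linarith only [hIGlt, hgain]
  obtain ⟨t, htT, hvart⟩ := hexists
  -- the chain of inequalities
  have htle : t ≤ T := htT.le
  have hc₀ : (0:ℝ) ≤ lamBar T ^2 := sq_nonneg _
  have hc₀c : lamBar T^2 ≤ c := by
    have := hlam2 T hT0
    rw [← hcdef] at this
    exact this.le
  have hdets0 := hdets T hT0
  have step1 : postVar k ((lamBar T^2) • (1 : Matrix (Fin T) (Fin T) ℝ)) (preT (xs T) T) x
      ≤ postVar k ((lamBar T^2) • (1 : Matrix (Fin t) (Fin t) ℝ)) (preT (xs T) t) x :=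
    postVar_prefix_mono hker (xs T) hc₀ T hdets0 x htle le_rfl
  have step2 : postVar k ((lamBar T^2) • (1 : Matrix (Fin t) (Fin t) ℝ)) (preT (xs T) t) x
      ≤ postVar k ((lamBar T^2) • (1 : Matrix (Fin t) (Fin t) ℝ)) (preT (xs T) t) (xs T t) := by
    have hstd := hmvr T hT0 t htT x hx
    unfold postStd at hstd
    have h2a := postVar_nonneg hker (preT (xs T) t) x hc₀ (hdets0 t htle)
    have h2b := postVar_nonneg hker (preT (xs T) t) (xs T t) hc₀ (hdets0 t htle)
    calc postVar k ((lamBar T^2) • (1 : Matrix (Fin t) (Fin t) ℝ)) (preT (xs T) t) x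
        = (Real.sqrt (postVar k ((lamBar T^2) • (1 : Matrix (Fin t) (Fin t) ℝ))
            (preT (xs T) t) x))^2 := (Real.sq_sqrt h2a).symm
      _ ≤ (Real.sqrt (postVar k ((lamBar T^2) • (1 : Matrix (Fin t) (Fin t) ℝ))
            (preT (xs T) t) (xs T t)))^2 := by
          apply pow_le_pow_left₀ (Real.sqrt_nonneg _) hstd
      _ = _ := Real.sq_sqrt h2b
  have step3 : postVar k ((lamBar T^2) • (1 : Matrix (Fin t) (Fin t) ℝ)) (preT (xs T) t)
        (xs T t)
      ≤ postVar k (c • (1 : Matrix (Fin t) (Fin t) ℝ)) (preT (xs T) t) (xs T t) :=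
    postVar_mono_noise hker (preT (xs T) t) (xs T t) hc₀ hc₀c (hdets0 t htle)
      (gram_det_ne_zero hker _ hcpos)
  have hfinalvar : postVar k ((lamBar T^2) • (1 : Matrix (Fin T) (Fin T) ℝ))
      (preT (xs T) T) x ≤ c := by linarith only [step1, step2, step3, hvart]
  -- conclude
  unfold postStd
  have hsqc : Real.sqrt c = Real.sqrt C * (T:ℝ)^(-(ν/(d:ℝ))) * L^(ν*(1+α)/(d:ℝ)) := by
    rw [hcdef, Real.sqrt_mul (mul_nonneg hC.le (Real.rpow_nonneg hTpos.le _)) (L^p),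
      Real.sqrt_mul hC.le]
    have h6 : Real.sqrt ((T:ℝ)^(-(2*ν)/(d:ℝ))) = (T:ℝ)^(-(ν/(d:ℝ))) := by
      rw [Real.sqrt_eq_rpow, ← Real.rpow_mul hTpos.le]
      congr 1
      ring
    have h7 : Real.sqrt (L^p) = L^(ν*(1+α)/(d:ℝ)) := by
      rw [Real.sqrt_eq_rpow, ← Real.rpow_mul hLpos.le, hpdef]
      congr 1
      ring
    rw [h6, h7]
  have hL2logT : L ≤ 2*Real.log (T:ℝ) := by
    have h12a : (3:ℝ)*(T:ℝ) ≤ (T:ℝ)*(T:ℝ) := mul_le_mul_of_nonneg_right hTR hTpos.le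
    have h12 : (1:ℝ) + (T:ℝ) ≤ (T:ℝ)*(T:ℝ) := by linarith only [h12a, hT1]
    calc L ≤ Real.log ((T:ℝ)*(T:ℝ)) := by
          rw [hLdef]; exact Real.log_le_log (by linarith only [hTpos]) h12
      _ = Real.log (T:ℝ) + Real.log (T:ℝ) := Real.log_mul (ne_of_gt hTpos) (ne_of_gt hTpos)
      _ = 2*Real.log (T:ℝ) := by ring
  have hLe : L^(ν*(1+α)/(d:ℝ)) ≤ (2:ℝ)^(ν*(1+α)/(d:ℝ)) * (Real.log (T:ℝ))^(ν*(1+α)/(d:ℝ)) := by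
    have hexp0 : 0 ≤ ν*(1+α)/(d:ℝ) := by
      apply div_nonneg (by nlinarith only [hν0, hα]) hdpos.le
    calc L^(ν*(1+α)/(d:ℝ)) ≤ (2*Real.log (T:ℝ))^(ν*(1+α)/(d:ℝ)) :=
          Real.rpow_le_rpow hLpos.le hL2logT hexp0
      _ = (2:ℝ)^(ν*(1+α)/(d:ℝ)) * (Real.log (T:ℝ))^(ν*(1+α)/(d:ℝ)) :=
          Real.mul_rpow (by norm_num) hlogT0
  calc Real.sqrt (postVar k ((lamBar T^2) • (1 : Matrix (Fin T) (Fin T) ℝ)) (preT (xs T) T) x)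
      ≤ Real.sqrt c := Real.sqrt_le_sqrt hfinalvar
    _ = Real.sqrt C * (T:ℝ)^(-(ν/(d:ℝ))) * L^(ν*(1+α)/(d:ℝ)) := hsqc
    _ ≤ Real.sqrt C * (T:ℝ)^(-(ν/(d:ℝ)))
        * ((2:ℝ)^(ν*(1+α)/(d:ℝ)) * (Real.log (T:ℝ))^(ν*(1+α)/(d:ℝ))) := by
        apply mul_le_mul_of_nonneg_left hLe
        exact mul_nonneg (Real.sqrt_nonneg C) (Real.rpow_pos_of_pos hTpos (-(ν/(d:ℝ)))).le
    _ = Real.sqrt C * (2:ℝ)^(ν*(1+α)/(d:ℝ)) * (T:ℝ)^(-(ν/(d:ℝ)))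
        * (Real.log (T:ℝ))^(ν*(1+α)/(d:ℝ)) := by ring
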